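/- arXiv:1004.2342 — 4 statements merged into one kernel-verified Lean document; each statement's English description precedes it below -/
import Mathlib

section
/- Let (Ω, F, P) be a probability space, S a finite set, N ≥ 1, and X, Y : Ω → S^N random variables (S^N carrying the discrete σ-algebra). Suppose G : S^N × S^N → [0,1] is a stochastic matrix (Σ_y G(x,y) = 1 for each x) that is invariant under simultaneous permutations (G(σ(x),σ(y)) = G(x,y) for all permutations σ of {1,…,N}), and that the joint law satisfies P(X = x, Y = y) = P(X = x)·G(x,y) for all x, y ∈ S^N. Then for every function φ : P^N → ℝ, the conditional expectation E[φ(μ^N(Y)) | σ(X)] is almost surely equal to a σ(μ^N(X))-measurable function; equivalently, E[φ(μ^N(Y)) | σ(X)] = E[φ(μ^N(Y)) | σ(μ^N(X))] almost surely. -/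
open MeasureTheory

noncomputable def empMeas {S : Type*} [Fintype S] [DecidableEq S] {N : ℕ}
    (x : Fin N → S) : S → ℝ :=
  fun i => ((Finset.univ.filter fun n => x n = i).card : ℝ) / N

lemma empMeas_comp_perm {S : Type*} [Fintype S] [DecidableEq S] {N : ℕ}
    (σ : Equiv.Perm (Fin N)) (y : Fin N → S) :
    empMeas (fun n => y (σ.symm n)) = empMeas y := by
  funext i
  unfold empMeas
  have : (Finset.univ.filter fun n => y (σ.symm n) = i).card
      = (Finset.univ.filter fun n => y n = i).card := by
    apply Finset.card_bij (fun n _ => σ.symm n)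
    · intro a ha
      simp only [Finset.mem_filter, Finset.mem_univ, true_and] at ha ⊢
      exact ha
    · intro a _ b _ hab
      exact σ.symm.injective hab
    · intro b hb
      refine ⟨σ b, ?_, by simp⟩
      simp only [Finset.mem_filter, Finset.mem_univ, true_and] at hb ⊢
      simpa using hb
  rw [this]

lemma exists_perm_of_empMeas_eq {S : Type*} [Fintype S] [DecidableEq S] {N : ℕ}
    (hN : 1 ≤ N) {x x' : Fin N → S} (h : empMeas x = empMeas x') :
    ∃ σ : Equiv.Perm (Fin N), ∀ n, x' n = x (σ.symm n) := by
  have hNR : (N : ℝ) ≠ 0 := Nat.cast_ne_zero.mpr (by omega)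
  have hcard : ∀ i, Fintype.card {n // x n = i} = Fintype.card {n // x' n = i} := by
    intro i
    have h1 := congrFun h i
    unfold empMeas at h1
    field_simp at h1
    simp only [Fintype.card_subtype]
    exact_mod_cast h1
  let e : ∀ i : S, {n // x n = i} ≃ {n // x' n = i} := fun i => Fintype.equivOfCardEq (hcard i)
  let σ : Equiv.Perm (Fin N) :=
    (Equiv.sigmaFiberEquiv x).symm.trans ((Equiv.sigmaCongrRight e).trans (Equiv.sigmaFiberEquiv x'))
  have key : ∀ m, x' (σ m) = x m := fun m => (e (x m) ⟨m, rfl⟩).2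
  refine ⟨σ, fun n => ?_⟩
  calc x' n = x' (σ (σ.symm n)) := by rw [Equiv.apply_symm_apply]
    _ = x (σ.symm n) := key _

/-- One-step Markov property of the occupancy measure: if the joint law of `(X, Y)`
is given by a stochastic matrix `G` invariant under simultaneous relabeling of objects,
then for any `φ : P^N → ℝ`, `E[φ(μ^N(Y)) | σ(X)] = E[φ(μ^N(Y)) | σ(μ^N(X))]` a.s. -/
theorem condexp_occupancy_markov {Ω : Type*} [MeasurableSpace Ω]
    (P : Measure Ω) [IsProbabilityMeasure P]
    {S : Type*} [Fintype S] [DecidableEq S] {N : ℕ} (hN : 1 ≤ N)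
    (X Y : Ω → (Fin N → S))
    (hX : @Measurable Ω (Fin N → S) _ ⊤ X)
    (hY : @Measurable Ω (Fin N → S) _ ⊤ Y)
    (G : (Fin N → S) → (Fin N → S) → ℝ)
    (hG0 : ∀ x y, 0 ≤ G x y) (hG1 : ∀ x y, G x y ≤ 1)
    (hGsum : ∀ x, ∑ y : Fin N → S, G x y = 1)
    (hinv : ∀ (σ : Equiv.Perm (Fin N)) (x y : Fin N → S),
      G (fun n => x (σ.symm n)) (fun n => y (σ.symm n)) = G x y)
    (hjoint : ∀ x y : Fin N → S,
      (P {ω | X ω = x ∧ Y ω = y}).toReal = (P {ω | X ω = x}).toReal * G x y)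
    (φ : Set.range (empMeas (S := S) (N := N)) → ℝ) :
    P[fun ω => φ ⟨empMeas (Y ω), ⟨Y ω, rfl⟩⟩ | MeasurableSpace.comap X ⊤]
      =ᵐ[P]
    P[fun ω => φ ⟨empMeas (Y ω), ⟨Y ω, rfl⟩⟩ |
        MeasurableSpace.comap (fun ω => empMeas (X ω)) ⊤] := by
  classical
  -- basic nonemptiness
  have hΩ : Nonempty Ω := by
    by_contra hc
    rw [not_nonempty_iff] at hc
    have h1 : P Set.univ = 1 := measure_univ
    rw [Set.univ_eq_empty_iff.mpr hc, measure_empty] at h1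
    exact zero_ne_one h1
  haveI hSN : Nonempty (Fin N → S) := ⟨X (Classical.choice hΩ)⟩
  set ψ : (Fin N → S) → ℝ := fun y => φ ⟨empMeas y, ⟨y, rfl⟩⟩ with hψdef
  set f : Ω → ℝ := fun ω => φ ⟨empMeas (Y ω), ⟨Y ω, rfl⟩⟩ with hfdef
  have hfψ : f = fun ω => ψ (Y ω) := rfl
  set h : (Fin N → S) → ℝ := fun x => ∑ y, G x y * ψ y with hhdef
  -- integrability of compositions
  have hint : ∀ (u : (Fin N → S) → ℝ) (Z : Ω → (Fin N → S)),
      @Measurable Ω (Fin N → S) _ ⊤ Z → Integrable (fun ω => u (Z ω)) P := by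
    intro u Z hZ
    have hm : Measurable fun ω => u (Z ω) := measurable_from_top.comp hZ
    refine (integrable_const
        (Finset.univ.sup' Finset.univ_nonempty fun z => ‖u z‖)).mono'
      hm.aestronglyMeasurable (ae_of_all _ fun ω => ?_)
    exact Finset.le_sup' (fun z => ‖u z‖) (Finset.mem_univ (Z ω))
  have hfint : Integrable f P := hint ψ Y hY
  have hhint : Integrable (fun ω => h (X ω)) P := hint h X hX
  -- measurable atoms
  have hXx : ∀ x : Fin N → S, MeasurableSet (X ⁻¹' {x}) := fun x => hX trivial
  have hYy : ∀ y : Fin N → S, MeasurableSet (Y ⁻¹' {y}) := fun y => hY trivial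
  -- per-atom integral of f
  have key1 : ∀ x : Fin N → S,
      ∫ ω in X ⁻¹' {x}, f ω ∂P = (P (X ⁻¹' {x})).toReal * h x := by
    intro x
    have hdecomp : X ⁻¹' {x} = ⋃ y ∈ (Finset.univ : Finset (Fin N → S)),
        (X ⁻¹' {x} ∩ Y ⁻¹' {y}) := by
      ext ω; simp
    have hsplit : ∫ ω in X ⁻¹' {x}, f ω ∂P
        = ∑ y : Fin N → S, ∫ ω in X ⁻¹' {x} ∩ Y ⁻¹' {y}, f ω ∂P := by
      conv_lhs => rw [hdecomp]
      exact integral_biUnion_finset Finset.univ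
        (fun y _ => (hXx x).inter (hYy y))
        (by
          intro a _ b _ hab
          simp only [Function.onFun]
          rw [Set.disjoint_left]
          rintro ω ⟨-, ha⟩ ⟨-, hb⟩
          exact hab ((Set.mem_singleton_iff.mp ha).symm.trans (Set.mem_singleton_iff.mp hb)))
        (fun y _ => hfint.integrableOn)
    rw [hsplit]
    have hterm : ∀ y : Fin N → S,
        ∫ ω in X ⁻¹' {x} ∩ Y ⁻¹' {y}, f ω ∂P
          = (P (X ⁻¹' {x})).toReal * (G x y * ψ y) := by
      intro y
      rw [setIntegral_congr_fun ((hXx x).inter (hYy y))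
        (fun ω hω => by
          show f ω = ψ y
          rw [hfψ]
          simp only []
          rw [Set.mem_singleton_iff.mp hω.2]), setIntegral_const]
      have hset : X ⁻¹' {x} ∩ Y ⁻¹' {y} = {ω | X ω = x ∧ Y ω = y} := rfl
      have hset2 : X ⁻¹' {x} = {ω | X ω = x} := rfl
      rw [hset, smul_eq_mul, measureReal_def, hjoint x y, hset2]
      ring
    rw [Finset.sum_congr rfl (fun y _ => hterm y), ← Finset.mul_sum]
  -- per-atom integral of h ∘ X
  have key2 : ∀ x : Fin N → S,
      ∫ ω in X ⁻¹' {x}, h (X ω) ∂P = (P (X ⁻¹' {x})).toReal * h x := by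
    intro x
    rw [setIntegral_congr_fun (hXx x)
      (fun ω hω => by
        show h (X ω) = h x
        rw [Set.mem_singleton_iff.mp hω]), setIntegral_const, smul_eq_mul, measureReal_def]
  -- integral identity on all X-measurable sets
  have keyB : ∀ B : Set (Fin N → S),
      ∫ ω in X ⁻¹' B, (fun ω => h (X ω)) ω ∂P = ∫ ω in X ⁻¹' B, f ω ∂P := by
    intro B
    have hd : X ⁻¹' B = ⋃ x ∈ Finset.univ.filter (· ∈ B), X ⁻¹' {x} := by
      ext ω; simp
    have hdisj : (↑(Finset.univ.filter (· ∈ B)) : Set (Fin N → S)).Pairwise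
        (Function.onFun Disjoint fun x => X ⁻¹' {x}) := by
      intro a _ b _ hab
      simp only [Function.onFun]
      rw [Set.disjoint_left]
      rintro ω ha hb
      exact hab ((Set.mem_singleton_iff.mp ha).symm.trans (Set.mem_singleton_iff.mp hb))
    rw [hd,
      integral_biUnion_finset _ (fun x _ => hXx x) hdisj (fun x _ => hhint.integrableOn),
      integral_biUnion_finset _ (fun x _ => hXx x) hdisj (fun x _ => hfint.integrableOn)]
    exact Finset.sum_congr rfl fun x _ => (key2 x).trans (key1 x).symm
  -- invariance of h under equal empirical measures
  have hperm_ψ : ∀ (σ : Equiv.Perm (Fin N)) (y : Fin N → S),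
      ψ (fun n => y (σ.symm n)) = ψ y := by
    intro σ y
    exact congrArg φ (Subtype.ext (empMeas_comp_perm σ y))
  have hinv_h : ∀ x x' : Fin N → S, empMeas x = empMeas x' → h x = h x' := by
    intro x x' he
    obtain ⟨σ, hσ⟩ := exists_perm_of_empMeas_eq hN he
    have hx' : x' = fun n => x (σ.symm n) := funext hσ
    refine Fintype.sum_equiv (σ.arrowCongr (Equiv.refl S))
      (fun y => G x y * ψ y) (fun y => G x' y * ψ y) fun y => ?_
    show G x y * ψ y
        = G x' ((σ.arrowCongr (Equiv.refl S)) y) * ψ ((σ.arrowCongr (Equiv.refl S)) y)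
    have harr : ((σ.arrowCongr (Equiv.refl S)) y) = fun n => y (σ.symm n) := rfl
    rw [harr, hperm_ψ σ y, hx', hinv σ x y]
  -- h ∘ X is measurable w.r.t. σ(empMeas ∘ X)
  let k : (S → ℝ) → ℝ := fun μ =>
    if hh : ∃ z : Fin N → S, empMeas z = μ then h hh.choose else 0
  have hk : ∀ z : Fin N → S, k (empMeas z) = h z := by
    intro z
    have hz : ∃ w : Fin N → S, empMeas w = empMeas z := ⟨z, rfl⟩
    simp only [k, dif_pos hz]
    exact hinv_h hz.choose z hz.choose_spec
  have hm1 : MeasurableSpace.comap X ⊤ ≤ ‹MeasurableSpace Ω› :=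
    measurable_iff_comap_le.mp hX
  have hXemp : @Measurable Ω (S → ℝ) _ ⊤ (fun ω => empMeas (X ω)) :=
    (@measurable_from_top (Fin N → S) (S → ℝ) ⊤ empMeas).comp hX
  have hm2 : MeasurableSpace.comap (fun ω => empMeas (X ω)) ⊤ ≤ ‹MeasurableSpace Ω› :=
    measurable_iff_comap_le.mp hXemp
  have hsm1 : AEStronglyMeasurable[MeasurableSpace.comap X ⊤] (fun ω => h (X ω)) P := by
    refine StronglyMeasurable.aestronglyMeasurable ?_
    have hXm1 : @Measurable Ω (Fin N → S) (MeasurableSpace.comap X ⊤) ⊤ X :=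
      measurable_iff_comap_le.mpr le_rfl
    have hcomp1 : @Measurable Ω ℝ (MeasurableSpace.comap X ⊤) _ (fun ω => h (X ω)) :=
      (show @Measurable (Fin N → S) ℝ ⊤ _ h from measurable_from_top).comp hXm1
    exact hcomp1.stronglyMeasurable
  have hsm2 : AEStronglyMeasurable[MeasurableSpace.comap (fun ω => empMeas (X ω)) ⊤]
      (fun ω => h (X ω)) P := by
    refine StronglyMeasurable.aestronglyMeasurable ?_
    have heq : (fun ω => h (X ω)) = fun ω => k (empMeas (X ω)) :=
      funext fun ω => (hk (X ω)).symm
    rw [heq]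
    have hXm2 : @Measurable Ω (S → ℝ) (MeasurableSpace.comap (fun ω => empMeas (X ω)) ⊤) ⊤
        (fun ω => empMeas (X ω)) := measurable_iff_comap_le.mpr le_rfl
    have hcomp2 : @Measurable Ω ℝ (MeasurableSpace.comap (fun ω => empMeas (X ω)) ⊤) _
        (fun ω => k (empMeas (X ω))) :=
      (show @Measurable (S → ℝ) ℝ ⊤ _ k from measurable_from_top).comp hXm2
    exact hcomp2.stronglyMeasurable
  -- apply conditional-expectation uniqueness twice
  have hres1 : (fun ω => h (X ω)) =ᵐ[P] P[f | MeasurableSpace.comap X ⊤] := by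
    refine ae_eq_condExp_of_forall_setIntegral_eq hm1 hfint
      (fun s _ _ => hhint.integrableOn) (fun s hs _ => ?_) hsm1
    obtain ⟨B, -, rfl⟩ := hs
    exact keyB B
  have hres2 : (fun ω => h (X ω)) =ᵐ[P]
      P[f | MeasurableSpace.comap (fun ω => empMeas (X ω)) ⊤] := by
    refine ae_eq_condExp_of_forall_setIntegral_eq hm2 hfint
      (fun s _ _ => hhint.integrableOn) (fun s hs _ => ?_) hsm2
    obtain ⟨C, -, rfl⟩ := hs
    have : (fun ω => empMeas (X ω)) ⁻¹' C = X ⁻¹' (empMeas ⁻¹' C) := rfl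
    rw [this]
    exact keyB (empMeas ⁻¹' C)
  exact hres1.symm.trans hres2
end

section
/- Let (W_k)_{k∈ℕ} be a sequence of square-integrable, non-negative real random variables adapted to a filtration (F_k)_{k∈ℕ}, with W_0 = 0 almost surely, and constants α, β ≥ 0 such that E[W_{k+1} | F_k] ≤ α and E[W_{k+1}² | F_k] ≤ β almost surely for all k. Let Y_n = Σ_{k=0}^n W_k. Then for all n ∈ ℕ: E[Y_n²] ≤ n·β + n(n+1)·α². -/
open MeasureTheory

/-- Second-moment bound for partial sums: under the conditional moment bounds
`E[W_{k+1}|F_k] ≤ α` and `E[W_{k+1}²|F_k] ≤ β`, with `W_0 = 0`,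
`E[Y_n²] ≤ nβ + n(n+1)α²` where `Y_n = Σ_{k=0}^n W_k`. -/
theorem second_moment_partial_sums {Ω : Type*} {m0 : MeasurableSpace Ω}
    (P : Measure Ω) [IsProbabilityMeasure P]
    (ℱ : Filtration ℕ m0) (W : ℕ → Ω → ℝ)
    (hadapt : Adapted ℱ W)
    (hL2 : ∀ k, MemLp (W k) 2 P)
    (hnonneg : ∀ k, 0 ≤ᵐ[P] W k)
    (hW0 : W 0 =ᵐ[P] 0)
    (α β : ℝ) (hα : 0 ≤ α) (hβ : 0 ≤ β)
    (hcond1 : ∀ k, P[W (k + 1) | ℱ k] ≤ᵐ[P] fun _ => α)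
    (hcond2 : ∀ k, P[fun ω => (W (k + 1) ω) ^ 2 | ℱ k] ≤ᵐ[P] fun _ => β)
    (n : ℕ) :
    ∫ ω, (∑ k ∈ Finset.range (n + 1), W k ω) ^ 2 ∂P
      ≤ n * β + n * (n + 1) * α ^ 2 := by
  -- product of two L² functions is integrable
  have hmul : ∀ (f g : Ω → ℝ), MemLp f 2 P → MemLp g 2 P →
      Integrable (fun ω => f ω * g ω) P := by
    intro f g hf hg
    have h : MemLp (f • g) 1 P := by
      haveI : ENNReal.HolderTriple 2 2 1 := ENNReal.holderConjugate_iff.mpr (by simp [ENNReal.inv_two_add_inv_two])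
      exact hg.smul hf
    rw [memLp_one_iff_integrable] at h
    exact h
  set Y : ℕ → Ω → ℝ := fun n ω => ∑ k ∈ Finset.range (n + 1), W k ω with hY
  have hYmem : ∀ n, MemLp (Y n) 2 P := fun n =>
    memLp_finset_sum _ fun i _ => hL2 i
  have hYint : ∀ n, Integrable (Y n) P := fun n => (hYmem n).integrable one_le_two
  have hWint : ∀ k, Integrable (W k) P := fun k => (hL2 k).integrable one_le_two
  have hYmeas : ∀ n, StronglyMeasurable[ℱ n] (Y n) := by
    intro n
    apply Finset.stronglyMeasurable_fun_sum
    intro i hi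
    exact ((hadapt i).mono (ℱ.mono (Nat.lt_succ_iff.mp (Finset.mem_range.mp hi))) le_rfl).stronglyMeasurable
  have hEW : ∀ k, ∫ ω, W (k + 1) ω ∂P ≤ α := by
    intro k
    calc ∫ ω, W (k + 1) ω ∂P = ∫ ω, (P[W (k + 1) | ℱ k]) ω ∂P :=
          (integral_condExp (ℱ.le k)).symm
      _ ≤ ∫ _, α ∂P := integral_mono_ae integrable_condExp (integrable_const α) (hcond1 k)
      _ = α := by simp
  have hEW2 : ∀ k, ∫ ω, (W (k + 1) ω) ^ 2 ∂P ≤ β := by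
    intro k
    calc ∫ ω, (W (k + 1) ω) ^ 2 ∂P
        = ∫ ω, (P[fun ω => (W (k + 1) ω) ^ 2 | ℱ k]) ω ∂P :=
          (integral_condExp (ℱ.le k)).symm
      _ ≤ ∫ _, β ∂P := integral_mono_ae integrable_condExp (integrable_const β) (hcond2 k)
      _ = β := by simp
  have hEY : ∀ n, ∫ ω, Y n ω ∂P ≤ n * α := by
    intro n
    induction n with
    | zero =>
      have : Y 0 =ᵐ[P] 0 := by
        filter_upwards [hW0] with ω h0
        simp [hY, Finset.sum_range_one, h0]
      rw [integral_congr_ae this]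
      simp
    | succ m ih =>
      have hsum : ∀ ω, Y (m + 1) ω = Y m ω + W (m + 1) ω := by
        intro ω; simp [hY, Finset.sum_range_succ]
      calc ∫ ω, Y (m + 1) ω ∂P = ∫ ω, (Y m ω + W (m + 1) ω) ∂P := by
            simp_rw [hsum]
        _ = (∫ ω, Y m ω ∂P) + ∫ ω, W (m + 1) ω ∂P :=
            integral_add (hYint m) (hWint (m + 1))
        _ ≤ m * α + α := add_le_add ih (hEW m)
        _ = (m + 1 : ℕ) * α := by push_cast; ring
  have hYnonneg : ∀ n, 0 ≤ᵐ[P] Y n := by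
    intro n
    have := ae_all_iff.mpr hnonneg
    filter_upwards [this] with ω hω
    exact Finset.sum_nonneg fun i _ => hω i
  -- main induction
  suffices H : ∀ n, ∫ ω, (Y n ω) ^ 2 ∂P ≤ n * β + n * (n + 1) * α ^ 2 from H n
  intro n
  induction n with
  | zero =>
    have : (fun ω => (Y 0 ω) ^ 2) =ᵐ[P] 0 := by
      filter_upwards [hW0] with ω h0
      simp [hY, Finset.sum_range_one, h0]
    rw [integral_congr_ae this]
    simp
  | succ m ih =>
    have iY2 := (hYmem m).integrable_sq
    have iYW := hmul _ _ (hYmem m) (hL2 (m + 1))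
    have iW2 := (hL2 (m + 1)).integrable_sq
    have hsplit : ∫ ω, (Y (m + 1) ω) ^ 2 ∂P
        = (∫ ω, (Y m ω) ^ 2 ∂P) + ((∫ ω, 2 * (Y m ω * W (m + 1) ω) ∂P)
          + ∫ ω, (W (m + 1) ω) ^ 2 ∂P) := by
      have h1 : ∀ ω, (Y (m + 1) ω) ^ 2
          = (Y m ω) ^ 2 + (2 * (Y m ω * W (m + 1) ω) + (W (m + 1) ω) ^ 2) := by
        intro ω
        simp only [hY, Finset.sum_range_succ]
        ring
      calc ∫ ω, (Y (m + 1) ω) ^ 2 ∂P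
          = ∫ ω, ((Y m ω) ^ 2 + (2 * (Y m ω * W (m + 1) ω) + (W (m + 1) ω) ^ 2)) ∂P := by
            simp_rw [h1]
        _ = (∫ ω, (Y m ω) ^ 2 ∂P)
            + ∫ ω, (2 * (Y m ω * W (m + 1) ω) + (W (m + 1) ω) ^ 2) ∂P :=
            integral_add iY2 ((iYW.const_mul 2).add iW2)
        _ = _ := by rw [integral_add (iYW.const_mul 2) iW2]
    -- bound the cross term
    have hpull : P[Y m * W (m + 1) | ℱ m] =ᵐ[P] Y m * P[W (m + 1) | ℱ m] :=
      condExp_mul_of_stronglyMeasurable_left (hYmeas m) iYW (hWint (m + 1))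
    have iYc : Integrable (fun ω => Y m ω * (P[W (m + 1) | ℱ m]) ω) P := by
      refine Integrable.mono' (((hYint m).mul_const α).abs)
        ((hYmem m).1.mul
          (stronglyMeasurable_condExp.mono (ℱ.le m)).aestronglyMeasurable) ?_
      filter_upwards [hYnonneg m, hcond1 m, condExp_nonneg (hnonneg (m + 1))]
        with ω h0 hc hc0
      rw [Real.norm_eq_abs, abs_mul, abs_of_nonneg h0, abs_of_nonneg hc0]
      exact le_abs_self _ |>.trans' (mul_le_mul_of_nonneg_left hc h0)
    have hcross : ∫ ω, Y m ω * W (m + 1) ω ∂P ≤ m * α * α := by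
      calc ∫ ω, Y m ω * W (m + 1) ω ∂P
          = ∫ ω, (P[Y m * W (m + 1) | ℱ m]) ω ∂P :=
            (integral_condExp (ℱ.le m)).symm
        _ = ∫ ω, Y m ω * (P[W (m + 1) | ℱ m]) ω ∂P :=
            integral_congr_ae hpull
        _ ≤ ∫ ω, Y m ω * α ∂P := by
            refine integral_mono_ae iYc ((hYint m).mul_const α) ?_
            filter_upwards [hYnonneg m, hcond1 m] with ω h0 hc
            exact mul_le_mul_of_nonneg_left hc h0
        _ = (∫ ω, Y m ω ∂P) * α := integral_mul_const α _
        _ ≤ m * α * α := mul_le_mul_of_nonneg_right (hEY m) hα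
    have h2 := hEW2 m
    rw [hsplit]
    rw [integral_const_mul 2]
    have := ih
    push_cast
    nlinarith [sq_nonneg α]
end

section
/- Let S ≥ 1, let (A, d) be a metric space, K ≥ 0, T > 0, and let f : ℝ^S × A → ℝ^S satisfy ‖f(m,a) − f(m',a')‖ ≤ K·(‖m − m'‖ + d(a,a')) for all m, m' ∈ ℝ^S and a, a' ∈ A. Let α, β : [0,T] → A be measurable control functions with s ↦ d(α(s), β(s)) integrable, and let m₁, m₂ : [0,T] → ℝ^S be continuous functions satisfying the integral equations m₁(t) = m₀ + ∫₀^t f(m₁(s), α(s)) ds and m₂(t) = m₀ + ∫₀^t f(m₂(s), β(s)) ds for all t ∈ [0,T], with the same initial condition m₀. Then for every t ∈ [0,T]: ‖m₁(t) − m₂(t)‖ ≤ K·e^{K·t}·∫₀^T d(α(s), β(s)) ds. -/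
open MeasureTheory

/-- Grönwall comparison of two mean-field trajectories driven by different controls:
if `m₁, m₂` solve the controlled integral equations with the same initial point `m₀`
and `f` is Lipschitz in both variables, then
`‖m₁(t) − m₂(t)‖ ≤ K e^{Kt} ∫₀^T d(α(s), β(s)) ds` for every `t ∈ [0,T]`. -/
theorem trajectories_dist_le_of_controls {A : Type*} [MetricSpace A]
    (S : ℕ) (hS : 1 ≤ S) (K T : ℝ) (hK : 0 ≤ K) (hT : 0 < T)
    (f : EuclideanSpace ℝ (Fin S) → A → EuclideanSpace ℝ (Fin S))
    (hf : ∀ (m m' : EuclideanSpace ℝ (Fin S)) (a a' : A),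
      ‖f m a - f m' a'‖ ≤ K * (‖m - m'‖ + dist a a'))
    (α β : ℝ → A)
    (hd : IntervalIntegrable (fun s => dist (α s) (β s)) volume 0 T)
    (m₀ : EuclideanSpace ℝ (Fin S))
    (m₁ m₂ : ℝ → EuclideanSpace ℝ (Fin S))
    (hm₁c : ContinuousOn m₁ (Set.Icc 0 T)) (hm₂c : ContinuousOn m₂ (Set.Icc 0 T))
    (hint₁ : IntervalIntegrable (fun s => f (m₁ s) (α s)) volume 0 T)
    (hint₂ : IntervalIntegrable (fun s => f (m₂ s) (β s)) volume 0 T)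
    (heq₁ : ∀ t ∈ Set.Icc (0 : ℝ) T, m₁ t = m₀ + ∫ s in (0 : ℝ)..t, f (m₁ s) (α s))
    (heq₂ : ∀ t ∈ Set.Icc (0 : ℝ) T, m₂ t = m₀ + ∫ s in (0 : ℝ)..t, f (m₂ s) (β s)) :
    ∀ t ∈ Set.Icc (0 : ℝ) T,
      ‖m₁ t - m₂ t‖ ≤ K * Real.exp (K * t) * ∫ s in (0 : ℝ)..T, dist (α s) (β s) := by
  set C : ℝ := ∫ s in (0 : ℝ)..T, dist (α s) (β s) with hCdef
  have hC0 : 0 ≤ C := intervalIntegral.integral_nonneg hT.le fun s _ => dist_nonneg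
  -- continuous extension of ‖m₁ - m₂‖ to ℝ
  set g : ℝ → ℝ := fun s => ‖Set.IccExtend hT.le ((Set.Icc (0:ℝ) T).restrict m₁) s -
      Set.IccExtend hT.le ((Set.Icc (0:ℝ) T).restrict m₂) s‖ with hgdef
  have hgeq : ∀ s ∈ Set.Icc (0:ℝ) T, g s = ‖m₁ s - m₂ s‖ := by
    intro s hs
    simp only [hgdef, Set.IccExtend, Function.comp_apply, Set.projIcc_of_mem hT.le hs,
      Set.restrict_apply]
    rfl
  have hgcont : Continuous g := by
    apply Continuous.norm
    exact (hm₁c.restrict.Icc_extend').sub (hm₂c.restrict.Icc_extend')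
  have hgnn : ∀ s, 0 ≤ g s := fun s => norm_nonneg _
  set G : ℝ → ℝ := fun u => ∫ s in (0:ℝ)..u, g s with hGdef
  have hG : ∀ u, HasDerivAt G (g u) u := fun u =>
    (hgcont.integral_hasStrictDerivAt 0 u).hasDerivAt
  -- key integral inequality
  have hkey : ∀ u ∈ Set.Icc (0:ℝ) T, g u ≤ K * G u + K * C := by
    intro u hu
    obtain ⟨hu0, huT⟩ := hu
    have humem : u ∈ Set.uIcc (0:ℝ) T := by
      rw [Set.uIcc_of_le hT.le]; exact ⟨hu0, huT⟩
    have hsub : Set.uIcc (0:ℝ) u ⊆ Set.uIcc (0:ℝ) T :=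
      Set.uIcc_subset_uIcc Set.left_mem_uIcc humem
    have hi1 : IntervalIntegrable (fun s => f (m₁ s) (α s)) volume 0 u := hint₁.mono_set hsub
    have hi2 : IntervalIntegrable (fun s => f (m₂ s) (β s)) volume 0 u := hint₂.mono_set hsub
    have hdu : IntervalIntegrable (fun s => dist (α s) (β s)) volume 0 u := hd.mono_set hsub
    have hm : m₁ u - m₂ u = ∫ s in (0:ℝ)..u, (f (m₁ s) (α s) - f (m₂ s) (β s)) := by
      rw [intervalIntegral.integral_sub hi1 hi2, heq₁ u ⟨hu0, huT⟩, heq₂ u ⟨hu0, huT⟩]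
      abel
    have h1 : ‖m₁ u - m₂ u‖ ≤ ∫ s in (0:ℝ)..u, ‖f (m₁ s) (α s) - f (m₂ s) (β s)‖ := by
      rw [hm]
      exact intervalIntegral.norm_integral_le_integral_norm hu0
    have h2 : (∫ s in (0:ℝ)..u, ‖f (m₁ s) (α s) - f (m₂ s) (β s)‖)
        ≤ ∫ s in (0:ℝ)..u, K * (g s + dist (α s) (β s)) := by
      apply intervalIntegral.integral_mono_on hu0 (hi1.sub hi2).norm
        (((hgcont.intervalIntegrable 0 u).add hdu).const_mul K)
      intro s hs
      have hsT : s ∈ Set.Icc (0:ℝ) T := ⟨hs.1, hs.2.trans huT⟩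
      rw [hgeq s hsT]
      exact hf _ _ _ _
    have h3 : (∫ s in (0:ℝ)..u, K * (g s + dist (α s) (β s)))
        = K * G u + K * ∫ s in (0:ℝ)..u, dist (α s) (β s) := by
      rw [intervalIntegral.integral_const_mul,
        intervalIntegral.integral_add (hgcont.intervalIntegrable 0 u) hdu]
      ring
    have h4 : (∫ s in (0:ℝ)..u, dist (α s) (β s)) ≤ C := by
      have hduT : IntervalIntegrable (fun s => dist (α s) (β s)) volume u T :=
        hd.mono_set (Set.uIcc_subset_uIcc humem Set.right_mem_uIcc)
      have := intervalIntegral.integral_add_adjacent_intervals hdu hduT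
      have hnn : 0 ≤ ∫ s in u..T, dist (α s) (β s) :=
        intervalIntegral.integral_nonneg huT fun s _ => dist_nonneg
      rw [hCdef, ← this]
      linarith
    calc g u = ‖m₁ u - m₂ u‖ := hgeq u ⟨hu0, huT⟩
      _ ≤ _ := h1
      _ ≤ _ := h2
      _ = _ := h3
      _ ≤ K * G u + K * C := by nlinarith
  -- Gronwall via monotone auxiliary function
  set φ : ℝ → ℝ := fun u => C * (1 - Real.exp (-K * u)) - Real.exp (-K * u) * G u with hφdef
  have hφd : ∀ u, HasDerivAt φ (Real.exp (-K * u) * (K * C + K * G u - g u)) u := by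
    intro u
    have he : HasDerivAt (fun u => Real.exp (-K * u)) (Real.exp (-K * u) * (-K)) u := by
      simpa using ((hasDerivAt_id u).const_mul (-K)).exp
    have h1 : HasDerivAt (fun u => C * (1 - Real.exp (-K * u)))
        (C * (0 - Real.exp (-K * u) * (-K))) u :=
      ((hasDerivAt_const u (1:ℝ)).sub he).const_mul C
    have h2 : HasDerivAt (fun u => Real.exp (-K * u) * G u)
        (Real.exp (-K * u) * (-K) * G u + Real.exp (-K * u) * g u) u := he.mul (hG u)
    convert h1.sub h2 using 1
    all_goals first | rfl | ring
  have hmono : MonotoneOn φ (Set.Icc 0 T) := by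
    apply monotoneOn_of_deriv_nonneg (convex_Icc 0 T)
      (fun u _ => (hφd u).continuousAt.continuousWithinAt)
      (fun u _ => ((hφd u).differentiableAt).differentiableWithinAt)
    intro u hu
    rw [interior_Icc] at hu
    rw [(hφd u).deriv]
    have := hkey u ⟨hu.1.le, hu.2.le⟩
    have hE : 0 < Real.exp (-K * u) := Real.exp_pos _
    nlinarith
  intro t ht
  have hφ0 : φ 0 = 0 := by
    simp [hφdef, hGdef, intervalIntegral.integral_same]
  have h0t : φ 0 ≤ φ t := hmono (Set.left_mem_Icc.2 hT.le) ht ht.1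
  rw [hφ0] at h0t
  -- φ t ≥ 0 gives G t ≤ C (exp (K t) - 1)
  have hE : 0 < Real.exp (-K * t) := Real.exp_pos _
  have hEinv : Real.exp (-K * t) * Real.exp (K * t) = 1 := by
    rw [← Real.exp_add]; norm_num
  have hGt : G t ≤ C * (Real.exp (K * t) - 1) := by
    have h : Real.exp (-K * t) * G t ≤ C * (1 - Real.exp (-K * t)) := by
      simp only [hφdef] at h0t; linarith
    nlinarith [Real.exp_pos (K * t)]
  have := hkey t ht
  rw [hgeq t ht] at this
  nlinarith [Real.exp_pos (K * t)]
end

section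
/- Let (Δ_k)_{k∈ℕ} be a sequence of square-integrable, non-negative real random variables adapted to a filtration (F_k)_{k∈ℕ} with Δ_0 = 0 almost surely. Let N ≥ 1, T > 0 and I, I₁, I₂ > 0 with I ≤ T, and suppose E[Δ_{k+1} | F_k] ≤ N·I₁ and E[Δ_{k+1}² | F_k] ≤ N²·I·I₂ almost surely for all k. Then for every b > 0: P( sup_{0 ≤ k ≤ ⌊T/I⌋} Σ_{j=0}^{k} Δ_j > b ) ≤ (T·N² / b²)·( I₂ + (I₁²/I²)·(T + I) ). -/
open MeasureTheory

private lemma memL2_mul_integrable' {Ω : Type*} {m0 : MeasurableSpace Ω} {P : Measure Ω}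
    {f g : Ω → ℝ} (hf : MemLp f 2 P) (hg : MemLp g 2 P) :
    Integrable (fun ω => f ω * g ω) P := by
  refine Integrable.mono' ((hf.integrable_sq.add hg.integrable_sq).div_const 2)
    (hf.1.mul hg.1) ?_
  filter_upwards with ω
  simp only [Pi.add_apply]
  rw [Real.norm_eq_abs, abs_mul]
  nlinarith [sq_nonneg (|f ω| - |g ω|), sq_abs (f ω), sq_abs (g ω)]

/-- Bound on the probability that the cumulated number of object transitions up to
horizon `⌊T/I⌋` exceeds `b`:
`P(sup_{0≤k≤⌊T/I⌋} Σ_{j=0}^k Δ_j > b) ≤ (T N²/b²)(I₂ + (I₁²/I²)(T + I))`. -/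
theorem cumulated_transitions_bound {Ω : Type*} {m0 : MeasurableSpace Ω}
    (P : Measure Ω) [IsProbabilityMeasure P]
    (ℱ : Filtration ℕ m0) (Δ : ℕ → Ω → ℝ)
    (hadapt : Adapted ℱ Δ)
    (hL2 : ∀ k, MemLp (Δ k) 2 P)
    (hnonneg : ∀ k, 0 ≤ᵐ[P] Δ k)
    (hΔ0 : Δ 0 =ᵐ[P] 0)
    (N : ℕ) (hN : 1 ≤ N) (T I I₁ I₂ : ℝ)
    (hT : 0 < T) (hI : 0 < I) (hI₁ : 0 < I₁) (hI₂ : 0 < I₂) (hIT : I ≤ T)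
    (hcond1 : ∀ k, P[Δ (k + 1) | ℱ k] ≤ᵐ[P] fun _ => (N : ℝ) * I₁)
    (hcond2 : ∀ k, P[fun ω => (Δ (k + 1) ω) ^ 2 | ℱ k]
        ≤ᵐ[P] fun _ => (N : ℝ) ^ 2 * I * I₂)
    (b : ℝ) (hb : 0 < b) :
    P {ω | ∃ k ≤ ⌊T / I⌋₊, b < ∑ j ∈ Finset.range (k + 1), Δ j ω}
      ≤ ENNReal.ofReal
          (T * (N : ℝ) ^ 2 / b ^ 2 * (I₂ + I₁ ^ 2 / I ^ 2 * (T + I))) := by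
  set n := ⌊T / I⌋₊ with hn
  set S : Ω → ℝ := fun ω => ∑ j ∈ Finset.range (n + 1), Δ j ω with hSdef
  have hmul : ∀ i j : ℕ, Integrable (fun ω => Δ i ω * Δ j ω) P :=
    fun i j => memL2_mul_integrable' (hL2 i) (hL2 j)
  have hint : ∀ i, Integrable (Δ i) P := fun i => (hL2 i).integrable one_le_two
  have hNI₁ : (0:ℝ) ≤ (N:ℝ) * I₁ := by positivity
  -- first-moment bound
  have hE1 : ∀ i, ∫ ω, Δ i ω ∂P ≤ (N:ℝ) * I₁ := by
    intro i
    cases i with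
    | zero =>
      rw [integral_congr_ae hΔ0]
      simpa using hNI₁
    | succ k =>
      rw [← integral_condExp (ℱ.le k) (f := Δ (k+1))]
      calc ∫ ω, (P[Δ (k+1)|ℱ k]) ω ∂P ≤ ∫ _ω, (N:ℝ) * I₁ ∂P :=
            integral_mono_ae integrable_condExp (integrable_const _) (hcond1 k)
        _ = (N:ℝ) * I₁ := by simp
  -- off-diagonal bound
  have hoff : ∀ i j : ℕ, i < j → ∫ ω, Δ i ω * Δ j ω ∂P ≤ ((N:ℝ) * I₁)^2 := by
    intro i j hij
    obtain ⟨k, rfl⟩ : ∃ k, j = k + 1 := ⟨j - 1, by omega⟩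
    have hik : i ≤ k := by omega
    have hsm : StronglyMeasurable[ℱ k] (Δ i) := ((hadapt i).mono (ℱ.mono hik) le_rfl).stronglyMeasurable
    have h1 : ∫ ω, Δ i ω * Δ (k+1) ω ∂P
        = ∫ ω, (P[fun ω => Δ i ω * Δ (k+1) ω|ℱ k]) ω ∂P :=
      (integral_condExp (ℱ.le k) (f := fun ω => Δ i ω * Δ (k+1) ω)).symm
    have h2 : P[fun ω => Δ i ω * Δ (k+1) ω|ℱ k]
        =ᵐ[P] fun ω => Δ i ω * (P[Δ (k+1)|ℱ k]) ω :=
      condExp_mul_of_stronglyMeasurable_left hsm (hmul i (k+1)) (hint (k+1))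
    rw [h1, integral_congr_ae h2]
    have h3 : ∫ ω, Δ i ω * (P[Δ (k+1)|ℱ k]) ω ∂P ≤ ∫ ω, Δ i ω * ((N:ℝ) * I₁) ∂P := by
      refine integral_mono_of_nonneg ?_ ((hint i).mul_const _) ?_
      · filter_upwards [hnonneg i, condExp_nonneg (m := ℱ k) (hnonneg (k+1))] with ω hω hc
        exact mul_nonneg hω hc
      · filter_upwards [hnonneg i, hcond1 k] with ω hω hc
        exact mul_le_mul_of_nonneg_left hc hω
    refine h3.trans ?_
    rw [integral_mul_const]
    calc (∫ ω, Δ i ω ∂P) * ((N:ℝ) * I₁) ≤ ((N:ℝ) * I₁) * ((N:ℝ) * I₁) :=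
          mul_le_mul_of_nonneg_right (hE1 i) hNI₁
      _ = ((N:ℝ) * I₁)^2 := (sq _).symm
  -- diagonal bound
  have hdiag : ∀ k : ℕ, ∫ ω, Δ (k+1) ω * Δ (k+1) ω ∂P ≤ (N:ℝ)^2 * I * I₂ := by
    intro k
    have hrw : (fun ω => Δ (k+1) ω * Δ (k+1) ω) = fun ω => Δ (k+1) ω ^ 2 := by
      funext ω; ring
    rw [hrw, ← integral_condExp (ℱ.le k) (f := fun ω => Δ (k+1) ω ^ 2)]
    calc ∫ ω, (P[fun ω => Δ (k+1) ω ^ 2|ℱ k]) ω ∂P ≤ ∫ _ω, (N:ℝ)^2 * I * I₂ ∂P :=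
          integral_mono_ae integrable_condExp (integrable_const _) (hcond2 k)
      _ = (N:ℝ)^2 * I * I₂ := by simp
  -- second moment of S
  have hSmem : MemLp S 2 P := memLp_finset_sum _ (fun i _ => hL2 i)
  have hSint2 : Integrable (fun ω => S ω ^ 2) P := hSmem.integrable_sq
  have hSshift : S =ᵐ[P] fun ω => ∑ i ∈ Finset.range n, Δ (i+1) ω := by
    filter_upwards [hΔ0] with ω h0
    simp only [hSdef, Finset.sum_range_succ']
    simp [h0]
  have hS2 : ∫ ω, S ω ^ 2 ∂P
      = ∑ i ∈ Finset.range n, ∑ j ∈ Finset.range n, ∫ ω, Δ (i+1) ω * Δ (j+1) ω ∂P := by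
    have hc : ∫ ω, S ω ^ 2 ∂P
        = ∫ ω, ∑ i ∈ Finset.range n, ∑ j ∈ Finset.range n, Δ (i+1) ω * Δ (j+1) ω ∂P := by
      refine integral_congr_ae ?_
      filter_upwards [hSshift] with ω hω
      rw [hω, sq, Finset.sum_mul_sum]
    rw [hc, integral_finset_sum _ fun i _ => integrable_finset_sum _ fun j _ => hmul _ _]
    exact Finset.sum_congr rfl fun i _ => integral_finset_sum _ fun j _ => hmul _ _
  have hterm : ∀ i ∈ Finset.range n,
      ∑ j ∈ Finset.range n, ∫ ω, Δ (i+1) ω * Δ (j+1) ω ∂P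
        ≤ (N:ℝ)^2 * I * I₂ + (n:ℝ) * ((N:ℝ) * I₁)^2 := by
    intro i hi
    calc ∑ j ∈ Finset.range n, ∫ ω, Δ (i+1) ω * Δ (j+1) ω ∂P
        ≤ ∑ j ∈ Finset.range n,
            ((if i = j then (N:ℝ)^2 * I * I₂ else 0) + ((N:ℝ) * I₁)^2) := by
          refine Finset.sum_le_sum fun j _ => ?_
          rcases lt_trichotomy i j with h | h | h
          · rw [if_neg h.ne, zero_add]
            exact hoff _ _ (by omega)
          · subst h
            rw [if_pos rfl]
            exact (hdiag i).trans (le_add_of_nonneg_right (by positivity))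
          · rw [if_neg h.ne', zero_add]
            calc ∫ ω, Δ (i+1) ω * Δ (j+1) ω ∂P
                = ∫ ω, Δ (j+1) ω * Δ (i+1) ω ∂P := by simp_rw [mul_comm]
              _ ≤ _ := hoff _ _ (by omega)
      _ = (if i ∈ Finset.range n then (N:ℝ)^2 * I * I₂ else 0)
            + (n:ℝ) * ((N:ℝ) * I₁)^2 := by
          rw [Finset.sum_add_distrib, Finset.sum_ite_eq, Finset.sum_const,
            Finset.card_range, nsmul_eq_mul]
      _ ≤ _ := by rw [if_pos hi]
  have hS2bound : ∫ ω, S ω ^ 2 ∂P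
      ≤ (n:ℝ) * ((N:ℝ)^2 * I * I₂ + (n:ℝ) * ((N:ℝ) * I₁)^2) := by
    rw [hS2]
    calc ∑ i ∈ Finset.range n, ∑ j ∈ Finset.range n, ∫ ω, Δ (i+1) ω * Δ (j+1) ω ∂P
        ≤ ∑ _i ∈ Finset.range n, ((N:ℝ)^2 * I * I₂ + (n:ℝ) * ((N:ℝ) * I₁)^2) :=
          Finset.sum_le_sum hterm
      _ = _ := by rw [Finset.sum_const, Finset.card_range, nsmul_eq_mul]
  -- numeric bound
  have hnI : (n:ℝ) * I ≤ T := by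
    have h := Nat.floor_le (by positivity : (0:ℝ) ≤ T / I)
    calc (n:ℝ) * I ≤ (T / I) * I := mul_le_mul_of_nonneg_right h hI.le
      _ = T := div_mul_cancel₀ T hI.ne'
  have hnn : (0:ℝ) ≤ (n:ℝ) := Nat.cast_nonneg n
  have hmain : ∫ ω, S ω ^ 2 ∂P
      ≤ T * (N:ℝ)^2 * (I₂ + I₁^2 / I^2 * (T + I)) := by
    refine hS2bound.trans ?_
    have h1 : (n:ℝ) * ((N:ℝ)^2 * I * I₂) ≤ T * (N:ℝ)^2 * I₂ := by
      calc (n:ℝ) * ((N:ℝ)^2 * I * I₂) = ((n:ℝ) * I) * ((N:ℝ)^2 * I₂) := by ring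
        _ ≤ T * ((N:ℝ)^2 * I₂) := mul_le_mul_of_nonneg_right hnI (by positivity)
        _ = T * (N:ℝ)^2 * I₂ := by ring
    have hsq : (n:ℝ)^2 ≤ T * (T + I) / I^2 := by
      rw [le_div_iff₀ (by positivity)]
      nlinarith [mul_le_mul hnI hnI (mul_nonneg hnn hI.le) hT.le, mul_pos hT hI]
    have h2 : (n:ℝ) * ((n:ℝ) * ((N:ℝ) * I₁)^2)
        ≤ T * (N:ℝ)^2 * (I₁^2 / I^2 * (T + I)) := by
      have : (n:ℝ) * ((n:ℝ) * ((N:ℝ) * I₁)^2) = (n:ℝ)^2 * ((N:ℝ)^2 * I₁^2) := by ring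
      rw [this]
      calc (n:ℝ)^2 * ((N:ℝ)^2 * I₁^2) ≤ (T * (T + I) / I^2) * ((N:ℝ)^2 * I₁^2) :=
            mul_le_mul_of_nonneg_right hsq (by positivity)
        _ = T * (N:ℝ)^2 * (I₁^2 / I^2 * (T + I)) := by ring
    calc (n:ℝ) * ((N:ℝ)^2 * I * I₂ + (n:ℝ) * ((N:ℝ) * I₁)^2)
        = (n:ℝ) * ((N:ℝ)^2 * I * I₂) + (n:ℝ) * ((n:ℝ) * ((N:ℝ) * I₁)^2) := by ring
      _ ≤ T * (N:ℝ)^2 * I₂ + T * (N:ℝ)^2 * (I₁^2 / I^2 * (T + I)) := add_le_add h1 h2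
      _ = T * (N:ℝ)^2 * (I₂ + I₁^2 / I^2 * (T + I)) := by ring
  -- reduce the event to the last partial sum
  have hset : P {ω | ∃ k ≤ n, b < ∑ j ∈ Finset.range (k + 1), Δ j ω}
      = P {ω | b < S ω} := by
    apply measure_congr
    rw [Filter.eventuallyEq_set]
    have hall : ∀ᵐ ω ∂P, ∀ i, 0 ≤ Δ i ω := ae_all_iff.2 hnonneg
    filter_upwards [hall] with ω hω
    constructor
    · rintro ⟨k, hk, hbk⟩
      refine hbk.trans_le (Finset.sum_le_sum_of_subset_of_nonneg
        (Finset.range_subset_range.2 (by omega)) fun j _ _ => hω j)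
    · intro h
      exact ⟨n, le_rfl, h⟩
  rw [hset]
  -- Markov / Chebyshev
  have hb2 : (0:ℝ) < b^2 := by positivity
  have hmeasf : AEMeasurable (fun ω => ENNReal.ofReal (S ω ^ 2)) P :=
    ENNReal.measurable_ofReal.comp_aemeasurable hSint2.1.aemeasurable
  have key := mul_meas_ge_le_lintegral₀ (μ := P) hmeasf (ENNReal.ofReal (b^2))
  have hlin : ∫⁻ ω, ENNReal.ofReal (S ω ^ 2) ∂P = ENNReal.ofReal (∫ ω, S ω ^ 2 ∂P) :=
    (ofReal_integral_eq_lintegral_ofReal hSint2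
      (Filter.Eventually.of_forall fun ω => sq_nonneg _)).symm
  have hsub : {ω | b < S ω} ⊆ {ω | ENNReal.ofReal (b^2) ≤ ENNReal.ofReal (S ω ^ 2)} := by
    intro ω hω
    simp only [Set.mem_setOf_eq] at *
    exact ENNReal.ofReal_le_ofReal (by nlinarith)
  calc P {ω | b < S ω}
      ≤ P {ω | ENNReal.ofReal (b^2) ≤ ENNReal.ofReal (S ω ^ 2)} := measure_mono hsub
    _ ≤ ENNReal.ofReal (∫ ω, S ω ^ 2 ∂P) / ENNReal.ofReal (b^2) := by
        rw [ENNReal.le_div_iff_mul_le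
          (Or.inl (by simp [hb2, hb.ne'] : ENNReal.ofReal (b^2) ≠ 0))
          (Or.inl ENNReal.ofReal_ne_top), mul_comm]
        rw [← hlin]
        exact key
    _ = ENNReal.ofReal ((∫ ω, S ω ^ 2 ∂P) / b^2) := (ENNReal.ofReal_div_of_pos hb2).symm
    _ ≤ ENNReal.ofReal (T * (N:ℝ)^2 / b^2 * (I₂ + I₁^2 / I^2 * (T + I))) := by
        refine ENNReal.ofReal_le_ofReal ?_
        have hdiv : (∫ ω, S ω ^ 2 ∂P) / b^2
            ≤ (T * (N:ℝ)^2 * (I₂ + I₁^2 / I^2 * (T + I))) / b^2 := by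
          gcongr
        exact hdiv.trans_eq (by ring)
end
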